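/- Let d ≥ 1, ω ∈ ℕ, and let P = (p_1,…,p_n) be n points drawn independently and uniformly at random from the grid D = {0,…,2^ω−1}^d. Let Q be an axis-aligned query hypercube in D containing #Q grid points, and let cells(Q) be the set of dyadic cells C with #Q ≤ #C < 2·#Q that intersect Q. Then the expected number of indices j with p_j ∈ ⋃ cells(Q) is at most 2^{d+1} · n · #Q / #D; i.e. the expected overhead of scanning cells(Q) is at most a factor 2^{d+1} compared to the expected number n·#Q/#D of points in Q itself. -/

import Mathlib

open MeasureTheory

/-- The level-`k` dyadic cell of `ℕ^d` with corner `c`: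
`Π_j {c_j,…,c_j+2^k−1}`; it contains `2^{kd}` grid points. -/
def cellD (d k : ℕ) (c : Fin d → ℕ) : Set (Fin d → ℕ) :=
  {x | ∀ j, c j ≤ x j ∧ x j < c j + 2 ^ k}

/-- The axis-aligned box `Π_j {a_j,…,a_j+q−1}` of side length `q`;
it contains `q^d` grid points. -/
def boxD (d q : ℕ) (a : Fin d → ℕ) : Set (Fin d → ℕ) :=
  {x | ∀ j, a j ≤ x j ∧ x j < a j + q}

/-- `cells(Q)` for the query hypercube `Q = Π_j {a_j,…,a_j+q−1}` in the grid
`{0,…,2^ω−1}^d`: the set of dyadic cells `C` of the grid with `#Q ≤ #C < 2·#Q`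
(where `#C = 2^{kd}` for a level-`k` cell and `#Q = q^d`) that intersect `Q`. -/
def cellsQ (d ω q : ℕ) (a : Fin d → ℕ) : Set (Set (Fin d → ℕ)) :=
  {C | ∃ k ≤ ω, ∃ c : Fin d → ℕ, (∀ j, c j < 2 ^ ω ∧ 2 ^ k ∣ c j) ∧
      C = cellD d k c ∧ q ^ d ≤ 2 ^ (k * d) ∧ 2 ^ (k * d) < 2 * q ^ d ∧
      (cellD d k c ∩ boxD d q a).Nonempty}

/-- The uniform distribution (as a measure) on the grid `D = {0,…,2^ω−1}^d`. -/
noncomputable def gridUniform (d ω : ℕ) : Measure (Fin d → ℕ) :=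
  (PMF.uniformOfFinset (Fintype.piFinset fun _ : Fin d => Finset.range (2 ^ ω))
    (by
      rw [Fintype.piFinset_nonempty]
      intro j
      rw [Finset.nonempty_range_iff]
      positivity)).toMeasure

/-- The level of any cell of `cells(Q)` is uniquely determined: it is `⌈log₂ q⌉`. -/
lemma level_eq (d q k : ℕ) (hd : 1 ≤ d) (hle : q ^ d ≤ 2 ^ (k * d))
    (hlt : 2 ^ (k * d) < 2 * q ^ d) : k = Nat.clog 2 q := by
  rw [pow_mul] at hle hlt
  have h1 : q ≤ 2 ^ k := (Nat.pow_le_pow_iff_left (by omega)).mp hle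
  have h2 : 2 ^ k < 2 * q := by
    by_contra h
    push_neg at h
    have h3 : (2 * q) ^ d ≤ (2 ^ k) ^ d := Nat.pow_le_pow_left h d
    have h2q : 2 * q ^ d ≤ (2 * q) ^ d := by
      rw [mul_pow]
      have : 2 ≤ 2 ^ d := by
        calc 2 = 2 ^ 1 := rfl
        _ ≤ 2 ^ d := Nat.pow_le_pow_right (by norm_num) hd
      exact Nat.mul_le_mul_right _ this
    omega
  have hq1 : 1 ≤ q := by
    have : 0 < 2 ^ k := Nat.pow_pos (by norm_num)
    omega
  set m := Nat.clog 2 q with hm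
  have h1' : q ≤ 2 ^ m := Nat.le_pow_clog (by norm_num) q
  have h2' : 2 ^ m < 2 * q := by
    rcases eq_or_lt_of_le hq1 with h | h
    · simp [hm, ← h, Nat.clog_one_right]
    · have hm1 : 1 ≤ m := by
        rcases Nat.eq_zero_or_pos m with h0 | h0
        · rw [h0] at h1'; simp at h1'; omega
        · exact h0
      have hpred : 2 ^ (m - 1) < q := by
        have := Nat.pow_pred_clog_lt_self (b := 2) (by norm_num) h
        simpa [hm, Nat.pred_eq_sub_one] using this
      have hsplit : 2 ^ m = 2 * 2 ^ (m - 1) := by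
        rw [← pow_succ']; congr 1; omega
      omega
  have hk : 2 ^ k < 2 ^ (m + 1) := by
    calc 2 ^ k < 2 * q := h2
    _ ≤ 2 * 2 ^ m := by omega
    _ = 2 ^ (m+1) := by ring
  have hk' : 2 ^ m < 2 ^ (k + 1) := by
    calc 2 ^ m < 2 * q := h2'
    _ ≤ 2 * 2 ^ k := by omega
    _ = 2 ^ (k+1) := by ring
  have := (Nat.pow_lt_pow_iff_right (a := 2) (by norm_num)).mp hk
  have := (Nat.pow_lt_pow_iff_right (a := 2) (by norm_num)).mp hk'
  omega

/-- All the cells of `cells(Q)` are contained in a box of side length `2^{k+1}`,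
where `k = ⌈log₂ q⌉`. -/
lemma cellsQ_subset (d ω q : ℕ) (hd : 1 ≤ d) (a : Fin d → ℕ) :
    ⋃₀ cellsQ d ω q a ⊆
      boxD d (2 ^ (Nat.clog 2 q + 1))
        (fun j => 2 ^ Nat.clog 2 q * (a j / 2 ^ Nat.clog 2 q)) := by
  rintro x ⟨C, ⟨k, -, c, hc, rfl, hle, hlt, ⟨y, hy1, hy2⟩⟩, hx⟩
  have hk : k = Nat.clog 2 q := level_eq d q k hd hle hlt
  subst hk
  set k := Nat.clog 2 q
  have hkpos : 0 < 2 ^ k := Nat.pow_pos (by norm_num)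
  intro j
  obtain ⟨m, hm⟩ := (hc j).2
  have hq2k : q ≤ 2 ^ k := by
    rw [pow_mul] at hle
    exact (Nat.pow_le_pow_iff_left (by omega)).mp hle
  have hcx : c j ≤ x j ∧ x j < c j + 2 ^ k := hx j
  have hcy : c j ≤ y j ∧ y j < c j + 2 ^ k := hy1 j
  have hay : a j ≤ y j ∧ y j < a j + q := hy2 j
  have hlow : a j < c j + 2 ^ k := by omega
  have hhigh : c j < a j + q := by omega
  set t := a j / 2 ^ k with ht
  have hdm : 2 ^ k * t + a j % 2 ^ k = a j := Nat.div_add_mod (a j) (2 ^ k)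
  have hmod : a j % 2 ^ k < 2 ^ k := Nat.mod_lt _ hkpos
  have h5 : t ≤ m := by
    by_contra hcon
    push_neg at hcon
    have : m + 1 ≤ t := hcon
    have : 2 ^ k * (m + 1) ≤ 2 ^ k * t := Nat.mul_le_mul_left _ this
    have : a j < a j :=
      calc a j < c j + 2 ^ k := hlow
      _ = 2 ^ k * (m + 1) := by rw [hm]; ring
      _ ≤ 2 ^ k * t := by assumption
      _ ≤ 2 ^ k * t + a j % 2 ^ k := Nat.le_add_right _ _
      _ = a j := hdm
    exact absurd this (lt_irrefl _)
  have hb_le : 2 ^ k * t ≤ x j := by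
    calc 2 ^ k * t ≤ 2 ^ k * m := Nat.mul_le_mul_left _ h5
    _ = c j := hm.symm
    _ ≤ x j := hcx.1
  have h6 : m ≤ t + 1 := by
    by_contra hcon
    push_neg at hcon
    have : t + 2 ≤ m := by omega
    have : 2 ^ k * (t + 2) ≤ 2 ^ k * m := Nat.mul_le_mul_left _ this
    have h7 : c j < 2 ^ k * (t + 2) :=
      calc c j < a j + q := hhigh
      _ ≤ a j + 2 ^ k := by omega
      _ = 2 ^ k * t + a j % 2 ^ k + 2 ^ k := by rw [hdm]
      _ < 2 ^ k * t + 2 ^ k + 2 ^ k := by omega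
      _ = 2 ^ k * (t + 2) := by ring
    rw [hm] at h7
    have := Nat.lt_of_mul_lt_mul_left h7
    omega
  have hx_lt : x j < 2 ^ k * t + 2 ^ (k + 1) := by
    have : c j ≤ 2 ^ k * t + 2 ^ k := by
      calc c j = 2 ^ k * m := hm
      _ ≤ 2 ^ k * (t + 1) := Nat.mul_le_mul_left _ h6
      _ = 2 ^ k * t + 2 ^ k := by ring
    have := hcx.2
    have hp : 2 ^ (k + 1) = 2 ^ k + 2 ^ k := by ring
    omega
  exact ⟨hb_le, hx_lt⟩

/-- The expected number of uniform points falling in a set `U` equals `n·μ(U)`. -/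
lemma lintegral_ncard (d ω n : ℕ) (U : Set (Fin d → ℕ)) :
    ∫⁻ x : Fin n → Fin d → ℕ, ({j : Fin n | x j ∈ U}.ncard : ENNReal)
      ∂(Measure.pi fun _ : Fin n => gridUniform d ω) = n * gridUniform d ω U := by
  classical
  haveI : IsProbabilityMeasure (gridUniform d ω) := by unfold gridUniform; infer_instance
  have hpt : ∀ x : Fin n → Fin d → ℕ, ({j : Fin n | x j ∈ U}.ncard : ENNReal)
      = ∑ j : Fin n,
          Set.indicator ((fun y : Fin n → Fin d → ℕ => y j) ⁻¹' U) (fun _ => 1) x := by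
    intro x
    rw [Set.ncard_eq_toFinset_card', Set.toFinset_setOf, Finset.card_filter]
    push_cast
    exact Finset.sum_congr rfl fun j _ => by simp [Set.indicator_apply]
  simp_rw [hpt]
  rw [lintegral_finset_sum _ (fun j _ => measurable_of_countable _)]
  have hterm : ∀ j : Fin n,
      ∫⁻ x : Fin n → Fin d → ℕ,
        Set.indicator ((fun y : Fin n → Fin d → ℕ => y j) ⁻¹' U) (fun _ => 1) x
        ∂(Measure.pi fun _ : Fin n => gridUniform d ω) = gridUniform d ω U := by
    intro j
    rw [lintegral_indicator (Set.to_countable _).measurableSet, setLIntegral_one]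
    have hpre : (fun y : Fin n → Fin d → ℕ => y j) ⁻¹' U
        = Set.univ.pi (Function.update (fun _ : Fin n => (Set.univ : Set (Fin d → ℕ))) j U) := by
      ext y
      simp only [Set.mem_preimage, Set.mem_pi, Set.mem_univ, true_implies]
      constructor
      · intro h i
        rcases eq_or_ne i j with rfl | hij
        · simpa using h
        · simp [Function.update, hij]
      · intro h; simpa using h j
    rw [hpre, Measure.pi_pi]
    simp [Function.update_apply, apply_ite (gridUniform d ω), measure_univ]
  simp [hterm, Finset.sum_const, mul_comm]

/-- The uniform measure of a box of side length `s` is at most `s^d / 2^{ωd}`. -/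
lemma gridUniform_boxD_le (d ω s : ℕ) (b : Fin d → ℕ) :
    gridUniform d ω (boxD d s b) ≤ ((s ^ d : ℕ) : ENNReal) / ((2 ^ (ω * d) : ℕ) : ENNReal) := by
  classical
  unfold gridUniform
  rw [PMF.toMeasure_uniformOfFinset_apply _ _ (Set.to_countable _).measurableSet]
  have hcard : (Fintype.piFinset fun _ : Fin d => Finset.range (2 ^ ω)).card = 2 ^ (ω * d) := by
    rw [Fintype.card_piFinset]
    simp [Finset.card_range, ← pow_mul]
  have hsub : ((Fintype.piFinset fun _ : Fin d => Finset.range (2 ^ ω)).filter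
        (fun x => x ∈ boxD d s b)) ⊆ Fintype.piFinset fun j => Finset.Ico (b j) (b j + s) := by
    intro x hx
    rw [Finset.mem_filter] at hx
    rw [Fintype.mem_piFinset]
    intro j
    exact Finset.mem_Ico.mpr (hx.2 j)
  have hle := Finset.card_le_card hsub
  have hIco : (Fintype.piFinset fun j : Fin d => Finset.Ico (b j) (b j + s)).card = s ^ d := by
    rw [Fintype.card_piFinset]
    simp [Nat.card_Ico]
  rw [hcard]
  apply ENNReal.div_le_div_right
  exact_mod_cast hle.trans (le_of_eq hIco)

/-- Let `p_1,…,p_n` be drawn independently and uniformly at random from the grid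
`D = {0,…,2^ω−1}^d` (`d ≥ 1`), and let `Q` be an axis-aligned query hypercube in `D`
with `#Q = q^d` grid points.  Then the expected number of indices `j` with
`p_j ∈ ⋃ cells(Q)` is at most `2^{d+1}·n·#Q/#D` where `#D = 2^{ωd}`: the expected
overhead of scanning `cells(Q)` is at most a factor `2^{d+1}` compared to the
expected number `n·#Q/#D` of points in `Q` itself. -/
theorem expected_scan_overhead (d ω n : ℕ) (hd : 1 ≤ d) (q : ℕ) (a : Fin d → ℕ)
    (hQ : ∀ j, a j + q ≤ 2 ^ ω) :
    ∫⁻ x : Fin n → Fin d → ℕ,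
        ({j : Fin n | x j ∈ ⋃₀ cellsQ d ω q a}.ncard : ENNReal)
      ∂(Measure.pi fun _ : Fin n => gridUniform d ω) ≤
    2 ^ (d + 1) * n * q ^ d / 2 ^ (ω * d) := by
  classical
  set k := Nat.clog 2 q with hkdef
  rcases Set.eq_empty_or_nonempty (cellsQ d ω q a) with hE | ⟨C, hC⟩
  · simp [hE]
  · obtain ⟨k', -, c, -, -, hle, hlt, -⟩ := hC
    have hkeq : k' = k := level_eq d q k' hd hle hlt
    rw [hkeq] at hlt
    have hbound : (2 ^ (k + 1)) ^ d ≤ 2 ^ (d + 1) * q ^ d := by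
      calc (2 ^ (k + 1)) ^ d = 2 ^ (k * d) * 2 ^ d := by
            rw [← pow_mul, ← pow_add]; ring_nf
      _ ≤ (2 * q ^ d) * 2 ^ d := Nat.mul_le_mul_right _ (le_of_lt hlt)
      _ = 2 ^ (d + 1) * q ^ d := by ring
    calc ∫⁻ x : Fin n → Fin d → ℕ,
          ({j : Fin n | x j ∈ ⋃₀ cellsQ d ω q a}.ncard : ENNReal)
          ∂(Measure.pi fun _ : Fin n => gridUniform d ω)
        = n * gridUniform d ω (⋃₀ cellsQ d ω q a) := lintegral_ncard d ω n _
      _ ≤ n * gridUniform d ω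
            (boxD d (2 ^ (k + 1)) (fun j => 2 ^ k * (a j / 2 ^ k))) :=
          mul_le_mul_right (measure_mono (cellsQ_subset d ω q hd a)) _
      _ ≤ n * ((((2 ^ (k + 1)) ^ d : ℕ) : ENNReal) / ((2 ^ (ω * d) : ℕ) : ENNReal)) :=
          mul_le_mul_right (gridUniform_boxD_le d ω _ _) _
      _ ≤ 2 ^ (d + 1) * n * q ^ d / 2 ^ (ω * d) := by
          rw [← mul_div_assoc]
          have h2 : ((2 ^ (ω * d) : ℕ) : ENNReal) = 2 ^ (ω * d) := by push_cast; ring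
          rw [h2]
          apply ENNReal.div_le_div_right
          calc (n : ENNReal) * (((2 ^ (k + 1)) ^ d : ℕ) : ENNReal)
              = ((n * (2 ^ (k + 1)) ^ d : ℕ) : ENNReal) := by push_cast; ring
            _ ≤ ((n * (2 ^ (d + 1) * q ^ d) : ℕ) : ENNReal) := by
                exact_mod_cast Nat.mul_le_mul_left n hbound
            _ = 2 ^ (d + 1) * n * q ^ d := by push_cast; ring
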